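/- Let a ≥ 1 be a real number and let f, g: {0,1}^n → ℝ be a-self-bounding functions. Then the pointwise maximum h(x) = max(f(x), g(x)) is also a-self-bounding. -/
import Mathlib


noncomputable section

/-- A function `f : {0,1}^n → ℝ` is `a`-self-bounding. -/
def SelfBounding (n : ℕ) (a : ℝ) (f : (Fin n → Bool) → ℝ) : Prop :=
  ∀ x : Fin n → Bool,
    (∀ i : Fin n,
      f x - min (f (Function.update x i false)) (f (Function.update x i true)) ≤ 1) ∧
    ∑ i : Fin n,
      (f x - min (f (Function.update x i false)) (f (Function.update x i true))) ≤ a * f x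

lemma selfbounding_max_aux (n : ℕ) (a : ℝ)
    (f g : (Fin n → Bool) → ℝ) (hf : SelfBounding n a f)
    (x : Fin n → Bool) (hx : g x ≤ f x) :
    (∀ i : Fin n,
      max (f x) (g x) - min (max (f (Function.update x i false)) (g (Function.update x i false)))
        (max (f (Function.update x i true)) (g (Function.update x i true))) ≤ 1) ∧
    ∑ i : Fin n,
      (max (f x) (g x) - min (max (f (Function.update x i false)) (g (Function.update x i false)))
        (max (f (Function.update x i true)) (g (Function.update x i true)))) ≤
      a * max (f x) (g x) := by
  have hx' : max (f x) (g x) = f x := max_eq_left hx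
  have key : ∀ i : Fin n,
      max (f x) (g x) - min (max (f (Function.update x i false)) (g (Function.update x i false)))
        (max (f (Function.update x i true)) (g (Function.update x i true))) ≤
      f x - min (f (Function.update x i false)) (f (Function.update x i true)) := by
    intro i
    rw [hx']
    exact sub_le_sub_left (min_le_min (le_max_left _ _) (le_max_left _ _)) _
  refine ⟨fun i => (key i).trans ((hf x).1 i), ?_⟩
  calc ∑ i : Fin n, _ ≤ ∑ i : Fin n,
        (f x - min (f (Function.update x i false)) (f (Function.update x i true))) :=
        Finset.sum_le_sum fun i _ => key i
    _ ≤ a * f x := (hf x).2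
    _ = a * max (f x) (g x) := by rw [hx']

theorem selfbounding_max_closed (n : ℕ) (a : ℝ) (ha : 1 ≤ a)
    (f g : (Fin n → Bool) → ℝ) (hf : SelfBounding n a f) (hg : SelfBounding n a g) :
    SelfBounding n a (fun x => max (f x) (g x)) := by
  intro x
  rcases le_total (g x) (f x) with hcase | hcase
  · exact selfbounding_max_aux n a f g hf x hcase
  · have h := selfbounding_max_aux n a g f hg x hcase
    simp only [max_comm (g _) (f _)] at h
    exact h
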